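/- Let A be a unital C*-algebra in which any two nonzero projections are Murray-von Neumann equivalent, and let N₁, N₂ ∈ A be normal elements with finite spectra satisfying spectrum(N₁) = spectrum(N₂). Then N₁ and N₂ are approximately unitarily equivalent: for every ε > 0 there is a unitary U ∈ A with ‖N₁ - U N₂ U*‖ < ε. -/
import Mathlib

section Helpers
set_option linter.unusedSectionVars false

variable {A : Type*} [NormedRing A] [StarRing A] [CStarRing A] [CompleteSpace A]
    [NormedAlgebra ℂ A] [StarModule ℂ A]

private lemma stmt10.finite_continuousOn {s : Set ℂ} (hs : s.Finite) (g : ℂ → ℂ) :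
    ContinuousOn g s := by
  rw [continuousOn_iff_continuous_restrict]
  have := hs.to_subtype
  exact continuous_of_discreteTopology

/-- If `star v * v = P` is a projection, then `v * P = v`. -/
private lemma stmt10.mul_proj (v P : A) (hsa : IsSelfAdjoint P) (hP : IsIdempotentElem P)
    (h : star v * v = P) : v * P = v := by
  have hP2 : P * P = P := hP
  have key : star (v * P - v) * (v * P - v) = 0 := by
    calc star (v * P - v) * (v * P - v)
        = P * (star v * v) * P - P * (star v * v) - (star v * v) * P + star v * v := by
          simp only [star_sub, star_mul, hsa.star_eq]
          noncomm_ring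
      _ = 0 := by rw [h]; simp only [hP2]; abel
  have := (CStarRing.star_mul_self_eq_zero_iff _).mp key
  exact sub_eq_zero.mp this

/-- If `v * star v = P` is a projection, then `P * v = v`. -/
private lemma stmt10.proj_mul (v P : A) (hsa : IsSelfAdjoint P) (hP : IsIdempotentElem P)
    (h : v * star v = P) : P * v = v := by
  have h' : star (star v) * star v = P := by simpa using h
  have h2 := stmt10.mul_proj (star v) P hsa hP h'
  have := congrArg star h2
  simpa [star_mul, hsa.star_eq] using this

/-- Spectral decomposition of a normal element with finite spectrum. -/
private lemma stmt10.spectral_decomp (N : A) (hN : IsStarNormal N)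
    (hfin : (spectrum ℂ N).Finite) :
    ∃ P : ℂ → A,
      (∀ l, IsSelfAdjoint (P l)) ∧
      (∀ l, IsIdempotentElem (P l)) ∧
      (∀ l m, l ≠ m → P l * P m = 0) ∧
      (∑ l ∈ hfin.toFinset, P l = 1) ∧
      (∑ l ∈ hfin.toFinset, l • P l = N) ∧
      (∀ l ∈ spectrum ℂ N, P l ≠ 0) := by
  classical
  letI : CStarAlgebra A := ⟨⟩
  set f : ℂ → ℂ → ℂ := fun l z => if z = l then 1 else 0 with hf
  have hcont : ∀ g : ℂ → ℂ, ContinuousOn g (spectrum ℂ N) :=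
    fun g => stmt10.finite_continuousOn hfin g
  refine ⟨fun l => cfc (f l) N, ?_, ?_, ?_, ?_, ?_, ?_⟩
  · intro l
    rw [IsSelfAdjoint, ← cfc_star]
    refine cfc_congr fun z _ => ?_
    simp [hf, apply_ite (star : ℂ → ℂ)]
  · intro l
    rw [IsIdempotentElem, ← cfc_mul _ _ N (hcont _) (hcont _)]
    refine cfc_congr fun z _ => ?_
    simp only [hf]
    rcases eq_or_ne z l with rfl | h
    · simp
    · simp [h]
  · intro l m hlm
    rw [← cfc_mul _ _ N (hcont _) (hcont _)]
    have : ∀ z, f l z * f m z = 0 := by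
      intro z
      simp only [hf]
      rcases eq_or_ne z l with rfl | h
      · rw [if_neg hlm, mul_zero]
      · rw [if_neg h, zero_mul]
    calc cfc (fun z => f l z * f m z) N = cfc (fun _ : ℂ => (0 : ℂ)) N := by
          exact cfc_congr fun z _ => this z
      _ = 0 := cfc_const_zero ℂ N
  · rw [← cfc_sum _ N _ (fun i _ => hcont _)]
    have : cfc (∑ l ∈ hfin.toFinset, f l) N = cfc (fun _ : ℂ => (1 : ℂ)) N := by
      refine cfc_congr fun z hz => ?_
      have hzs : z ∈ hfin.toFinset := hfin.mem_toFinset.mpr hz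
      simp only [Finset.sum_apply, hf]
      rw [Finset.sum_ite_eq hfin.toFinset z (fun _ => (1 : ℂ)), if_pos hzs]
    rw [this, cfc_const_one ℂ N]
  · have heach : ∀ l, l • cfc (f l) N = cfc (fun z => l * f l z) N := by
      intro l
      rw [cfc_const_mul l (f l) N (hcont _)]
    calc ∑ l ∈ hfin.toFinset, l • cfc (f l) N
        = ∑ l ∈ hfin.toFinset, cfc (fun z => l * f l z) N := by
          exact Finset.sum_congr rfl fun l _ => heach l
      _ = cfc (∑ l ∈ hfin.toFinset, fun z => l * f l z) N := by
          rw [cfc_sum _ N _ (fun i _ => hcont _)]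
      _ = cfc (id : ℂ → ℂ) N := by
          refine cfc_congr fun z hz => ?_
          have hzs : z ∈ hfin.toFinset := hfin.mem_toFinset.mpr hz
          simp only [Finset.sum_apply, hf, mul_ite, mul_one, mul_zero, id_eq]
          rw [Finset.sum_ite_eq hfin.toFinset z (fun l => l), if_pos hzs]
      _ = N := cfc_id ℂ N
  · intro l hl hzero
    have hzero' : cfc (f l) N = 0 := hzero
    have h0 : cfc (f l) N = cfc (fun _ : ℂ => (0 : ℂ)) N := by
      rw [hzero', cfc_const_zero ℂ N]
    have := eqOn_of_cfc_eq_cfc h0 (hcont _) (hcont _)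
    have h1 := this hl
    simp [hf] at h1

end Helpers

/-- In a unital C*-algebra in which any two nonzero projections are Murray-von Neumann
equivalent, two normal elements with the same finite spectrum are approximately unitarily
equivalent. -/
theorem stmt10 {A : Type*} [NormedRing A] [StarRing A] [CStarRing A] [CompleteSpace A]
    [NormedAlgebra ℂ A] [StarModule ℂ A]
    (hproj : ∀ P Q : A, IsSelfAdjoint P → IsIdempotentElem P → P ≠ 0 →
      IsSelfAdjoint Q → IsIdempotentElem Q → Q ≠ 0 →
      ∃ v : A, star v * v = P ∧ v * star v = Q)
    (N₁ N₂ : A) (hN₁ : IsStarNormal N₁) (hN₂ : IsStarNormal N₂)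
    (hfin : (spectrum ℂ N₁).Finite) (hspec : spectrum ℂ N₁ = spectrum ℂ N₂) :
    ∀ ε > (0 : ℝ), ∃ u ∈ unitary A, ‖N₁ - u * N₂ * star u‖ < ε := by
  classical
  intro ε hε
  have hfin₂ : (spectrum ℂ N₂).Finite := hspec ▸ hfin
  obtain ⟨P, hPsa, hPidem, hPorth, hPsum, hPdec, hPne⟩ := stmt10.spectral_decomp N₁ hN₁ hfin
  obtain ⟨Q, hQsa, hQidem, hQorth, hQsum, hQdec, hQne⟩ := stmt10.spectral_decomp N₂ hN₂ hfin₂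
  set s : Finset ℂ := hfin.toFinset with hs
  have hsets : hfin₂.toFinset = s := by
    ext z
    simp [hs, Set.Finite.mem_toFinset, hspec]
  rw [hsets] at hQsum hQdec
  -- choose partial isometries
  have hvex : ∀ l : ℂ, ∃ v : A, l ∈ s → star v * v = Q l ∧ v * star v = P l := by
    intro l
    by_cases hl : l ∈ s
    · have hl₁ : l ∈ spectrum ℂ N₁ := hfin.mem_toFinset.mp hl
      have hl₂ : l ∈ spectrum ℂ N₂ := hspec ▸ hl₁
      obtain ⟨v, h1, h2⟩ := hproj (Q l) (P l) (hQsa l) (hQidem l) (hQne l hl₂)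
        (hPsa l) (hPidem l) (hPne l hl₁)
      exact ⟨v, fun _ => ⟨h1, h2⟩⟩
    · exact ⟨0, fun h => absurd h hl⟩
  choose v hv using hvex
  have hvq : ∀ l ∈ s, star (v l) * v l = Q l := fun l hl => (hv l hl).1
  have hvp : ∀ l ∈ s, v l * star (v l) = P l := fun l hl => (hv l hl).2
  have hvQ : ∀ l ∈ s, v l * Q l = v l :=
    fun l hl => stmt10.mul_proj (v l) (Q l) (hQsa l) (hQidem l) (hvq l hl)
  have hPv : ∀ l ∈ s, P l * v l = v l :=
    fun l hl => stmt10.proj_mul (v l) (P l) (hPsa l) (hPidem l) (hvp l hl)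
  have hsvP : ∀ l ∈ s, star (v l) * P l = star (v l) := by
    intro l hl
    have := congrArg star (hPv l hl)
    simpa [star_mul, (hPsa l).star_eq] using this
  have hQsv : ∀ l ∈ s, Q l * star (v l) = star (v l) := by
    intro l hl
    have := congrArg star (hvQ l hl)
    simpa [star_mul, (hQsa l).star_eq] using this
  set u : A := ∑ l ∈ s, v l with hu
  -- off-diagonal vanishing
  have hoffd : ∀ l ∈ s, ∀ m ∈ s, l ≠ m → star (v l) * v m = 0 := by
    intro l hl m hm hlm
    calc star (v l) * v m = (star (v l) * P l) * (P m * v m) := by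
          rw [hsvP l hl, hPv m hm]
      _ = star (v l) * (P l * P m) * v m := by simp only [mul_assoc]
      _ = 0 := by rw [hPorth l m hlm]; simp
  have hoffd' : ∀ l ∈ s, ∀ m ∈ s, l ≠ m → v l * star (v m) = 0 := by
    intro l hl m hm hlm
    calc v l * star (v m) = (v l * Q l) * (Q m * star (v m)) := by
          rw [hvQ l hl, hQsv m hm]
      _ = v l * (Q l * Q m) * star (v m) := by simp only [mul_assoc]
      _ = 0 := by rw [hQorth l m hlm]; simp
  have hu1 : star u * u = 1 := by
    rw [hu, star_sum, Finset.sum_mul_sum]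
    calc ∑ l ∈ s, ∑ m ∈ s, star (v l) * v m = ∑ l ∈ s, Q l := by
          refine Finset.sum_congr rfl fun l hl => ?_
          rw [Finset.sum_eq_single l (fun m hm hml => hoffd l hl m hm (Ne.symm hml) ▸ rfl)
            (fun h => absurd hl h)]
          exact hvq l hl
      _ = 1 := hQsum
  have hu2 : u * star u = 1 := by
    rw [hu, star_sum, Finset.sum_mul_sum]
    calc ∑ l ∈ s, ∑ m ∈ s, v l * star (v m) = ∑ l ∈ s, P l := by
          refine Finset.sum_congr rfl fun l hl => ?_
          rw [Finset.sum_eq_single l (fun m hm hml => hoffd' l hl m hm (Ne.symm hml) ▸ rfl)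
            (fun h => absurd hl h)]
          exact hvp l hl
      _ = 1 := hPsum
  have huQ : ∀ m ∈ s, u * Q m = v m := by
    intro m hm
    rw [hu, Finset.sum_mul]
    rw [Finset.sum_eq_single m (fun l hl hlm => ?_) (fun h => absurd hm h)]
    · exact hvQ m hm
    · calc v l * Q m = (v l * Q l) * Q m := by rw [hvQ l hl]
        _ = v l * (Q l * Q m) := by rw [mul_assoc]
        _ = 0 := by rw [hQorth l m hlm]; simp
  have hkey : u * N₂ * star u = N₁ := by
    rw [← hQdec, ← hPdec]
    rw [Finset.mul_sum, Finset.sum_mul]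
    refine Finset.sum_congr rfl fun m hm => ?_
    rw [mul_smul_comm, smul_mul_assoc]
    congr 1
    calc u * Q m * star u = v m * star u := by rw [huQ m hm]
      _ = ∑ l ∈ s, v m * star (v l) := by rw [hu, star_sum, Finset.mul_sum]
      _ = P m := by
          rw [Finset.sum_eq_single m (fun l hl hlm => hoffd' m hm l hl (Ne.symm hlm)) 
            (fun h => absurd hm h)]
          exact hvp m hm
  refine ⟨u, Unitary.mem_iff.mpr ⟨hu1, hu2⟩, ?_⟩
  rw [hkey, sub_self, norm_zero]
  exact hε
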